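/- For g(x) = f(x^re + x) − x^re and x, y in E = [x1co − a1, ∞) × [0, x2co], one has g(x) − g(y) = (A + F(x,y))(x − y) where ‖F(x,y)‖∞ ≤ C max(‖x‖∞, ‖y‖∞) for a constant C depending only on a1, a2, γ. -/

import Mathlib

private lemma abs_div_le' {p q a b : ℝ} (ha : 0 < a) (haq : a ≤ q) (hp : |p| ≤ b) :
    |p / q| ≤ b / a := by
  rw [abs_div, abs_of_pos (ha.trans_le haq)]
  exact div_le_div₀ ((abs_nonneg p).trans hp) hp ha haq

private lemma lincomb_abs {c u w m : ℝ} (hc0 : 0 ≤ c) (hc1 : c ≤ 1)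
    (hu : |u| ≤ m) (hw : |w| ≤ m) : |u + c * w| ≤ 2 * m := by
  have h1 := abs_add_le u (c * w)
  have h2 : |c * w| ≤ m := by
    rw [abs_mul, abs_of_nonneg hc0]
    nlinarith [abs_nonneg u, abs_nonneg w]
  linarith

set_option maxHeartbeats 2000000 in
/-- On `E = [x1co − a1, ∞) × [0, x2co]`, the increment of `g` satisfies
`g(x) − g(y) = (A + F(x,y))(x − y)` with `‖F(x,y)‖ ≤ C max(‖x‖, ‖y‖)`. -/
theorem g_increment_decomposition_with_F
    (a1 a2 γ : ℝ) (ha1 : 0 < a1) (ha2 : 0 < a2) (hγ0 : 0 < γ) (hγ1 : γ < 1)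
    (hc1 : a1 - γ * a2 > 0) (hc2 : a2 - γ * a1 > 0)
    (f : ℝ × ℝ → ℝ × ℝ)
    (hf : ∀ x : ℝ × ℝ,
      f x = (2 * x.1 * a1 / (a1 + x.1 + γ * x.2),
             2 * x.2 * a2 / (a2 + γ * x.1 + x.2)))
    (ρ : ℝ) (hρ : ρ = 2 * a2 / (a2 + γ * a1))
    (g : ℝ × ℝ → ℝ × ℝ)
    (hg : ∀ x : ℝ × ℝ, g x = f (((a1 : ℝ), (0 : ℝ)) + x) - ((a1 : ℝ), (0 : ℝ)))
    (A : ℝ × ℝ →L[ℝ] ℝ × ℝ)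
    (hA : ∀ v : ℝ × ℝ, A v = ((1 / 2) * v.1 - (γ / 2) * v.2, ρ * v.2))
    (x1co x2co : ℝ)
    (h1 : x1co = (a1 - γ * a2) / (1 - γ ^ 2))
    (h2 : x2co = (a2 - γ * a1) / (1 - γ ^ 2)) :
    ∃ (F : ℝ × ℝ → ℝ × ℝ → (ℝ × ℝ →L[ℝ] ℝ × ℝ)) (C : ℝ), 0 < C ∧
      ∀ x ∈ Set.Ici (x1co - a1) ×ˢ Set.Icc (0 : ℝ) x2co,
      ∀ y ∈ Set.Ici (x1co - a1) ×ˢ Set.Icc (0 : ℝ) x2co,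
        g x - g y = A (x - y) + F x y (x - y) ∧
        ‖F x y‖ ≤ C * max ‖x‖ ‖y‖ := by
  have hx1co : 0 < x1co := by
    rw [h1]
    apply div_pos hc1
    nlinarith
  refine ⟨fun x y =>
    ((-(x.1 + γ * x.2) / (2 * (2*a1 + x.1 + γ*x.2))
        - a1*(y.1 - γ*y.2) / ((2*a1 + x.1 + γ*x.2)*(2*a1 + y.1 + γ*y.2)))
        • ContinuousLinearMap.fst ℝ ℝ ℝ +
     (γ * ((x.1 + γ * x.2) / (2 * (2*a1 + x.1 + γ*x.2))
        - a1*(y.1 - γ*y.2) / ((2*a1 + x.1 + γ*x.2)*(2*a1 + y.1 + γ*y.2))))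
        • ContinuousLinearMap.snd ℝ ℝ ℝ).prod
    ((-(γ * (2*a2) * y.2 / ((a2 + γ*a1 + γ*x.1 + x.2)*(a2 + γ*a1 + γ*y.1 + y.2))))
        • ContinuousLinearMap.fst ℝ ℝ ℝ +
     (-(2*a2*(γ*x.1 + x.2) / ((a2 + γ*a1)*(a2 + γ*a1 + γ*x.1 + x.2)))
        - 2*a2*y.2 / ((a2 + γ*a1 + γ*x.1 + x.2)*(a2 + γ*a1 + γ*y.1 + y.2)))
        • ContinuousLinearMap.snd ℝ ℝ ℝ),
    6/a1 + 8/a2, by positivity, ?_⟩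
  intro x hx y hy
  obtain ⟨hx1, hx2⟩ := hx
  obtain ⟨hy1, hy2⟩ := hy
  simp only [Set.mem_Ici] at hx1 hy1
  obtain ⟨hx20, hx2u⟩ := hx2
  obtain ⟨hy20, hy2u⟩ := hy2
  -- denominator lower bounds
  have hDx : a1 ≤ 2*a1 + x.1 + γ*x.2 := by nlinarith [mul_nonneg hγ0.le hx20]
  have hDy : a1 ≤ 2*a1 + y.1 + γ*y.2 := by nlinarith [mul_nonneg hγ0.le hy20]
  have hEx : a2 ≤ a2 + γ*a1 + γ*x.1 + x.2 := by
    nlinarith [mul_le_mul_of_nonneg_left hx1 hγ0.le]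
  have hEy : a2 ≤ a2 + γ*a1 + γ*y.1 + y.2 := by
    nlinarith [mul_le_mul_of_nonneg_left hy1 hγ0.le]
  have hb : a2 ≤ a2 + γ*a1 := by nlinarith
  have hDx0 : (2*a1 + x.1 + γ*x.2) ≠ 0 := (ha1.trans_le hDx).ne'
  have hDy0 : (2*a1 + y.1 + γ*y.2) ≠ 0 := (ha1.trans_le hDy).ne'
  have hEx0 : (a2 + γ*a1 + γ*x.1 + x.2) ≠ 0 := (ha2.trans_le hEx).ne'
  have hEy0 : (a2 + γ*a1 + γ*y.1 + y.2) ≠ 0 := (ha2.trans_le hEy).ne'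
  have hb0 : (a2 + γ*a1) ≠ 0 := (ha2.trans_le hb).ne'
  constructor
  · -- the identity
    rw [hg, hg, hf, hf, hA, hρ]
    refine Prod.ext ?_ ?_
    · simp only [ContinuousLinearMap.prod_apply, ContinuousLinearMap.add_apply,
        ContinuousLinearMap.coe_smul', Pi.smul_apply, ContinuousLinearMap.coe_fst',
        ContinuousLinearMap.coe_snd', smul_eq_mul, Prod.fst_add, Prod.fst_sub,
        Prod.snd_add, Prod.snd_sub]
      have d1 : a1 + (a1 + x.1) + γ * x.2 ≠ 0 := by intro h; apply hDx0; linarith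
      have d2 : a1 + (a1 + y.1) + γ * y.2 ≠ 0 := by intro h; apply hDy0; linarith
      simp only [zero_add, sub_zero]
      field_simp
      ring
    · simp only [ContinuousLinearMap.prod_apply, ContinuousLinearMap.add_apply,
        ContinuousLinearMap.coe_smul', Pi.smul_apply, ContinuousLinearMap.coe_fst',
        ContinuousLinearMap.coe_snd', smul_eq_mul, Prod.fst_add, Prod.fst_sub,
        Prod.snd_add, Prod.snd_sub]
      have d1 : a2 + γ * (a1 + x.1) + x.2 ≠ 0 := by intro h; apply hEx0; linarith
      have d2 : a2 + γ * (a1 + y.1) + y.2 ≠ 0 := by intro h; apply hEy0; linarith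
      simp only [zero_add, sub_zero]
      field_simp
      ring
  · -- the norm bound
    set m := max ‖x‖ ‖y‖ with hm
    have hm0 : (0:ℝ) ≤ m := (norm_nonneg x).trans (le_max_left _ _)
    have hma1 : (0:ℝ) ≤ m / a1 := div_nonneg hm0 ha1.le
    have hma2 : (0:ℝ) ≤ m / a2 := div_nonneg hm0 ha2.le
    have hax1 : |x.1| ≤ m := le_trans (by rw [← Real.norm_eq_abs]; exact norm_fst_le x) (le_max_left _ _)
    have hax2 : |x.2| ≤ m := le_trans (by rw [← Real.norm_eq_abs]; exact norm_snd_le x) (le_max_left _ _)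
    have hay1 : |y.1| ≤ m := le_trans (by rw [← Real.norm_eq_abs]; exact norm_fst_le y) (le_max_right _ _)
    have hay2 : |y.2| ≤ m := le_trans (by rw [← Real.norm_eq_abs]; exact norm_snd_le y) (le_max_right _ _)
    have hCm : (0:ℝ) ≤ (6/a1 + 8/a2) * m := by
      apply mul_nonneg _ hm0; positivity
    apply ContinuousLinearMap.opNorm_le_bound _ hCm
    intro v
    set N := ‖v‖ with hN
    have hN0 : (0:ℝ) ≤ N := norm_nonneg v
    have hv1 : |v.1| ≤ N := by rw [← Real.norm_eq_abs]; exact norm_fst_le v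
    have hv2 : |v.2| ≤ N := by rw [← Real.norm_eq_abs]; exact norm_snd_le v
    -- numerator bounds
    have hp : |x.1 + γ * x.2| ≤ 2 * m := lincomb_abs hγ0.le hγ1.le hax1 hax2
    have hq : |y.1 - γ * y.2| ≤ 2 * m := by
      have := lincomb_abs hγ0.le hγ1.le hay1 ((abs_neg y.2) ▸ hay2)
      rw [mul_neg, ← sub_eq_add_neg] at this
      exact this
    have hr : |γ * x.1 + x.2| ≤ 2 * m := by
      have h := lincomb_abs hγ0.le hγ1.le hax2 hax1
      calc |γ * x.1 + x.2| = |x.2 + γ * x.1| := by ring_nf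
        _ ≤ 2 * m := h
    -- coefficient bounds
    have ht1 : |(x.1 + γ * x.2) / (2 * (2*a1 + x.1 + γ*x.2))| ≤ 2*m / (2*a1) :=
      abs_div_le' (by linarith) (by linarith) hp
    have ht2 : |a1*(y.1 - γ*y.2) / ((2*a1 + x.1 + γ*x.2)*(2*a1 + y.1 + γ*y.2))|
        ≤ a1*(2*m) / (a1*a1) := by
      refine abs_div_le' (by positivity) ?_ ?_
      · exact mul_le_mul hDx hDy ha1.le (ha1.le.trans hDx)
      · rw [abs_mul, abs_of_pos ha1]
        exact mul_le_mul_of_nonneg_left hq ha1.le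
    have heq1 : 2*m/(2*a1) + a1*(2*m)/(a1*a1) = 3*(m/a1) := by
      field_simp; ring
    have hcab1 : |-(x.1 + γ * x.2) / (2 * (2*a1 + x.1 + γ*x.2))
        - a1*(y.1 - γ*y.2) / ((2*a1 + x.1 + γ*x.2)*(2*a1 + y.1 + γ*y.2))| ≤ 3*(m/a1) := by
      have ht1' : |-(x.1 + γ * x.2) / (2 * (2*a1 + x.1 + γ*x.2))| ≤ 2*m / (2*a1) := by
        rw [neg_div, abs_neg]; exact ht1
      have h := (abs_sub (-(x.1 + γ * x.2) / (2 * (2*a1 + x.1 + γ*x.2)))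
        (a1*(y.1 - γ*y.2) / ((2*a1 + x.1 + γ*x.2)*(2*a1 + y.1 + γ*y.2)))).trans
        (add_le_add ht1' ht2)
      linarith
    have hcab2 : |γ * ((x.1 + γ * x.2) / (2 * (2*a1 + x.1 + γ*x.2))
        - a1*(y.1 - γ*y.2) / ((2*a1 + x.1 + γ*x.2)*(2*a1 + y.1 + γ*y.2)))| ≤ 3*(m/a1) := by
      rw [abs_mul, abs_of_pos hγ0]
      have h := (abs_sub ((x.1 + γ * x.2) / (2 * (2*a1 + x.1 + γ*x.2)))
        (a1*(y.1 - γ*y.2) / ((2*a1 + x.1 + γ*x.2)*(2*a1 + y.1 + γ*y.2)))).trans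
        (add_le_add ht1 ht2)
      nlinarith [h, heq1, abs_nonneg ((x.1 + γ * x.2) / (2 * (2*a1 + x.1 + γ*x.2))
        - a1*(y.1 - γ*y.2) / ((2*a1 + x.1 + γ*x.2)*(2*a1 + y.1 + γ*y.2))),
        mul_nonneg (sub_nonneg.2 hγ1.le) (abs_nonneg ((x.1 + γ * x.2) / (2 * (2*a1 + x.1 + γ*x.2))
        - a1*(y.1 - γ*y.2) / ((2*a1 + x.1 + γ*x.2)*(2*a1 + y.1 + γ*y.2))))]
    have hcab3 : |-(γ * (2*a2) * y.2 / ((a2 + γ*a1 + γ*x.1 + x.2)*(a2 + γ*a1 + γ*y.1 + y.2)))|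
        ≤ 2*(m/a2) := by
      rw [abs_neg]
      have hnum : |γ * (2*a2) * y.2| ≤ 2*a2*m := by
        rw [abs_mul, abs_mul, abs_of_pos hγ0, abs_of_pos (by linarith : (0:ℝ) < 2*a2)]
        nlinarith [abs_nonneg y.2, hay2,
          mul_nonneg (mul_nonneg (sub_nonneg.2 hγ1.le) (by linarith : (0:ℝ) ≤ 2*a2)) (abs_nonneg y.2),
          mul_le_mul_of_nonneg_left hay2 (by linarith : (0:ℝ) ≤ 2*a2)]
      have h := abs_div_le' (show (0:ℝ) < a2*a2 by positivity)
        (mul_le_mul hEx hEy ha2.le (ha2.le.trans hEx)) hnum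
      have heq : 2*a2*m/(a2*a2) = 2*(m/a2) := by field_simp
      rw [heq] at h
      exact h
    have hcab4 : |-(2*a2*(γ*x.1 + x.2) / ((a2 + γ*a1)*(a2 + γ*a1 + γ*x.1 + x.2)))
        - 2*a2*y.2 / ((a2 + γ*a1 + γ*x.1 + x.2)*(a2 + γ*a1 + γ*y.1 + y.2))| ≤ 6*(m/a2) := by
      have hnum1 : |2*a2*(γ*x.1 + x.2)| ≤ 2*a2*(2*m) := by
        rw [abs_mul, abs_of_pos (by linarith : (0:ℝ) < 2*a2)]
        nlinarith [abs_nonneg (γ*x.1 + x.2)]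
      have ht3 : |2*a2*(γ*x.1 + x.2) / ((a2 + γ*a1)*(a2 + γ*a1 + γ*x.1 + x.2))|
          ≤ 2*a2*(2*m)/(a2*a2) :=
        abs_div_le' (by positivity) (mul_le_mul hb hEx ha2.le (ha2.le.trans hb)) hnum1
      have hnum2 : |2*a2*y.2| ≤ 2*a2*m := by
        rw [abs_mul, abs_of_pos (by linarith : (0:ℝ) < 2*a2)]
        nlinarith [abs_nonneg y.2]
      have ht4 : |2*a2*y.2 / ((a2 + γ*a1 + γ*x.1 + x.2)*(a2 + γ*a1 + γ*y.1 + y.2))|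
          ≤ 2*a2*m/(a2*a2) :=
        abs_div_le' (by positivity) (mul_le_mul hEx hEy ha2.le (ha2.le.trans hEx)) hnum2
      have ht3' : |-(2*a2*(γ*x.1 + x.2) / ((a2 + γ*a1)*(a2 + γ*a1 + γ*x.1 + x.2)))|
          ≤ 2*a2*(2*m)/(a2*a2) := by rw [abs_neg]; exact ht3
      have h := (abs_sub (-(2*a2*(γ*x.1 + x.2) / ((a2 + γ*a1)*(a2 + γ*a1 + γ*x.1 + x.2))))
        (2*a2*y.2 / ((a2 + γ*a1 + γ*x.1 + x.2)*(a2 + γ*a1 + γ*y.1 + y.2)))).trans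
        (add_le_add ht3' ht4)
      have heq : 2*a2*(2*m)/(a2*a2) + 2*a2*m/(a2*a2) = 6*(m/a2) := by field_simp; ring
      linarith [heq ▸ h]
    -- assemble
    simp only [ContinuousLinearMap.prod_apply, ContinuousLinearMap.add_apply,
      ContinuousLinearMap.coe_smul', Pi.smul_apply, ContinuousLinearMap.coe_fst',
      ContinuousLinearMap.coe_snd', smul_eq_mul, Prod.norm_def, Real.norm_eq_abs]
    have hgoal : (6/a1 + 8/a2) * m * N = 6*((m/a1)*N) + 8*((m/a2)*N) := by
      field_simp
    rw [hgoal]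
    have hP : (0:ℝ) ≤ (m/a1)*N := mul_nonneg hma1 hN0
    have hQ : (0:ℝ) ≤ (m/a2)*N := mul_nonneg hma2 hN0
    refine max_le ?_ ?_
    · refine le_trans (abs_add_le _ _) ?_
      rw [abs_mul, abs_mul]
      refine le_trans (add_le_add
        (mul_le_mul hcab1 hv1 (abs_nonneg _) (mul_nonneg (by norm_num) hma1 : (0:ℝ) ≤ 3*(m/a1)))
        (mul_le_mul hcab2 hv2 (abs_nonneg _) (mul_nonneg (by norm_num) hma1 : (0:ℝ) ≤ 3*(m/a1)))) ?_
      linarith [hP, hQ]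
    · refine le_trans (abs_add_le _ _) ?_
      rw [abs_mul, abs_mul]
      refine le_trans (add_le_add
        (mul_le_mul hcab3 hv1 (abs_nonneg _) (mul_nonneg (by norm_num) hma2 : (0:ℝ) ≤ 2*(m/a2)))
        (mul_le_mul hcab4 hv2 (abs_nonneg _) (mul_nonneg (by norm_num) hma2 : (0:ℝ) ≤ 6*(m/a2)))) ?_
      linarith [hP, hQ]
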